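/- Fix integers n ≥ 1, d ≥ 1, τ ≥ 2, constants L > 0, β ≥ 1, κ ≥ 0, ζ_1, …, ζ_n ≥ 0, a learning rate η with 0 < η ≤ 1/(3·τ·L), and a point θ ∈ ℝ^d. Let f_1, …, f_n : ℝ^d → ℝ be differentiable with L-Lipschitz gradients, set f := (1/n)·Σ_{i=1}^n f_i, and suppose the bounded-dissimilarity condition (1/n)·Σ_{i=1}^n ‖∇f_i(x)‖² ≤ β²·‖∇f(x)‖² + κ² holds for all x ∈ ℝ^d. On a probability space with a filtration (ℱ_s)_{s=0,…,τ}, let random vectors θ_i^s and g_i^s (for i = 1,…,n and s = 0,…,τ) satisfy: θ_i^0 = θ; θ_i^{s+1} = θ_i^s − η·g_i^s; θ_i^s is ℱ_s-measurable; E[g_i^s | ℱ_s] = ∇f_i(θ_i^s) almost surely; E‖g_i^s − ∇f_i(θ_i^s)‖² ≤ ζ_i²; and all θ_i^s, g_i^s are square-integrable. Then for every integer s with 0 ≤ s ≤ τ, (1/n)·Σ_{i=1}^n E‖θ − θ_i^s‖² ≤ 16·η²·τ²·β²·‖∇f(θ)‖² + 16·η²·τ²·κ² + 4·τ·η²·ζ̄²,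 where ζ̄² := (1/n)·Σ_{i=1}^n ζ_i². -/

import Mathlib

set_option maxHeartbeats 1000000

open MeasureTheory

lemma auxBLD_integrable_inner {Ω : Type*} {m0 : MeasurableSpace Ω} {P : Measure Ω}
    {E : Type*} [NormedAddCommGroup E] [InnerProductSpace ℝ E]
    {f g : Ω → E} (hf : MemLp f 2 P) (hg : MemLp g 2 P) :
    Integrable (fun ω => (inner ℝ (f ω) (g ω) : ℝ)) P :=
  (L2.integrable_inner (𝕜 := ℝ) (hf.toLp f) (hg.toLp g)).congr <| by
    filter_upwards [hf.coeFn_toLp, hg.coeFn_toLp] with ω h1 h2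
    rw [h1, h2]

lemma auxBLD_pullout {Ω : Type*} {d : ℕ} {m m0 : MeasurableSpace Ω} (hm : m ≤ m0)
    {P : Measure Ω} [IsProbabilityMeasure P]
    {Y Z : Ω → EuclideanSpace ℝ (Fin d)}
    (hYm : StronglyMeasurable[m] Y) (hY : MemLp Y 2 P) (hZ : MemLp Z 2 P)
    (hZ0 : P[Z|m] =ᵐ[P] 0) :
    ∫ ω, (inner ℝ (Y ω) (Z ω) : ℝ) ∂P = 0 := by
  have hZint : Integrable Z P := hZ.integrable one_le_two
  have hYj2 : ∀ j : Fin d, MemLp (fun ω => Y ω j) 2 P := fun j =>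
    (EuclideanSpace.proj j (𝕜 := ℝ)).comp_memLp' hY
  have hZj2 : ∀ j : Fin d, MemLp (fun ω => Z ω j) 2 P := fun j =>
    (EuclideanSpace.proj j (𝕜 := ℝ)).comp_memLp' hZ
  have hprod : ∀ j : Fin d, Integrable (fun ω => Y ω j * Z ω j) P := by
    intro j
    have := auxBLD_integrable_inner (hYj2 j) (hZj2 j)
    simpa [RCLike.inner_apply, starRingEnd_apply, mul_comm] using this
  have key : ∀ j : Fin d, ∫ ω, Y ω j * Z ω j ∂P = 0 := by
    intro j
    have hZjint : Integrable (fun ω => Z ω j) P := (hZj2 j).integrable one_le_two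
    have hYjm : StronglyMeasurable[m] (fun ω => Y ω j) :=
      (EuclideanSpace.proj j (𝕜 := ℝ)).continuous.comp_stronglyMeasurable hYm
    have hZj0 : P[fun ω => Z ω j|m] =ᵐ[P] 0 := by
      have h0 : (fun _ : Ω => (0 : ℝ)) =ᵐ[P] P[fun ω => Z ω j|m] := by
        refine ae_eq_condExp_of_forall_setIntegral_eq hm hZjint ?_ ?_ ?_
        · intro s _ _; exact (integrable_zero _ _ _).integrableOn
        · intro s hs _
          have hZr : Integrable Z (P.restrict s) := hZint.integrableOn
          have h1 : ∫ ω in s, Z ω j ∂P = EuclideanSpace.proj j (𝕜 := ℝ) (∫ ω in s, Z ω ∂P) :=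
            ((EuclideanSpace.proj j (𝕜 := ℝ)).integral_comp_comm hZr)
          have h2 : ∫ ω in s, Z ω ∂P = 0 := by
            rw [← setIntegral_condExp hm hZint hs]
            rw [setIntegral_congr_ae (hm s hs) (hZ0.mono fun ω hω _ => hω)]
            simp
          simp [h1, h2]
        · exact stronglyMeasurable_const.aestronglyMeasurable
      exact h0.symm
    have hmul := condExp_mul_of_stronglyMeasurable_left (μ := P) hYjm (hprod j) hZjint
    have heq : P[(fun ω => Y ω j) * fun ω => Z ω j|m] =ᵐ[P] 0 := by
      refine hmul.trans ?_
      filter_upwards [hZj0] with ω hω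
      simp only [Pi.mul_apply, Pi.zero_apply] at *
      rw [hω, mul_zero]
    calc ∫ ω, Y ω j * Z ω j ∂P
        = ∫ ω, (P[(fun ω => Y ω j) * fun ω => Z ω j|m]) ω ∂P := (integral_condExp hm).symm
      _ = ∫ ω, (0 : ℝ) ∂P := integral_congr_ae heq
      _ = 0 := integral_zero _ _
  have hrw : (fun ω => (inner ℝ (Y ω) (Z ω) : ℝ)) = fun ω => ∑ j, Y ω j * Z ω j := by
    funext ω
    simp [PiLp.inner_apply, RCLike.inner_apply, starRingEnd_apply, mul_comm]
  rw [hrw, integral_finset_sum _ (fun j _ => hprod j)]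
  exact Finset.sum_eq_zero fun j _ => key j

lemma auxBLD_mart_sum {Ω : Type*} {m0 : MeasurableSpace Ω} {P : Measure Ω}
    [IsProbabilityMeasure P] {d : ℕ} (ℱ : Filtration ℕ m0)
    (X : ℕ → Ω → EuclideanSpace ℝ (Fin d)) (τ : ℕ)
    (hXm : ∀ r < τ, StronglyMeasurable[ℱ (r + 1)] (X r))
    (hX2 : ∀ r < τ, MemLp (X r) 2 P)
    (hX0 : ∀ r < τ, P[X r|ℱ r] =ᵐ[P] 0) :
    ∀ s ≤ τ, ∫ ω, ‖∑ r ∈ Finset.range s, X r ω‖ ^ 2 ∂P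
      = ∑ r ∈ Finset.range s, ∫ ω, ‖X r ω‖ ^ 2 ∂P := by
  intro s
  induction s with
  | zero => simp
  | succ s ih =>
    intro hs
    have hsτ : s < τ := hs
    have hS2 : MemLp (fun ω => ∑ r ∈ Finset.range s, X r ω) 2 P := by
      have := memLp_finset_sum' (Finset.range s)
        (fun r hr => hX2 r (lt_of_lt_of_le (Finset.mem_range.mp hr) hsτ.le))
      convert this using 1
      funext ω
      simp
    have hSm : StronglyMeasurable[ℱ s] (fun ω => ∑ r ∈ Finset.range s, X r ω) := by
      apply Finset.stronglyMeasurable_fun_sum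
      intro r hr
      have hr' := Finset.mem_range.mp hr
      exact (hXm r (lt_of_lt_of_le hr' hsτ.le)).mono (ℱ.mono hr')
    have hcross : ∫ ω, (inner ℝ (∑ r ∈ Finset.range s, X r ω) (X s ω) : ℝ) ∂P = 0 :=
      auxBLD_pullout (ℱ.le s) hSm hS2 (hX2 s hsτ) (hX0 s hsτ)
    have hintS : Integrable (fun ω => ‖∑ r ∈ Finset.range s, X r ω‖ ^ 2) P :=
      hS2.norm.integrable_sq
    have hintX : Integrable (fun ω => ‖X s ω‖ ^ 2) P := (hX2 s hsτ).norm.integrable_sq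
    have hintI : Integrable (fun ω => (inner ℝ (∑ r ∈ Finset.range s, X r ω) (X s ω) : ℝ)) P :=
      auxBLD_integrable_inner hS2 (hX2 s hsτ)
    have hexp : (fun ω => ‖∑ r ∈ Finset.range (s + 1), X r ω‖ ^ 2)
        = fun ω => ‖∑ r ∈ Finset.range s, X r ω‖ ^ 2
            + 2 * (inner ℝ (∑ r ∈ Finset.range s, X r ω) (X s ω) : ℝ) + ‖X s ω‖ ^ 2 := by
      funext ω
      rw [Finset.sum_range_succ]
      exact norm_add_sq_real _ _
    have hint1 : Integrable (fun ω => ‖∑ r ∈ Finset.range s, X r ω‖ ^ 2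
        + 2 * (inner ℝ (∑ r ∈ Finset.range s, X r ω) (X s ω) : ℝ)) P :=
      hintS.add (hintI.const_mul 2)
    rw [hexp, integral_add hint1 hintX, integral_add hintS (hintI.const_mul 2),
      integral_const_mul, hcross, Finset.sum_range_succ, ih hsτ.le]
    ring

/-- Bounded Local Divergence lemma: under smoothness, bounded dissimilarity, conditionally
unbiased stochastic gradients with bounded variance, local SGD with learning rate
`η ≤ 1/(3τL)` satisfies, for every `0 ≤ s ≤ τ`,
`(1/n)·Σ_i E‖θ − θ_i^s‖² ≤ 16·η²·τ²·β²·‖∇f(θ)‖² + 16·η²·τ²·κ² + 4·τ·η²·ζ̄²`. -/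
theorem bounded_local_divergence {Ω : Type*} {mΩ : MeasurableSpace Ω}
    (P : Measure Ω) [IsProbabilityMeasure P]
    (n d τ : ℕ) (hn : 1 ≤ n) (hd : 1 ≤ d) (hτ : 2 ≤ τ)
    (L β κ η : ℝ) (ζ : Fin n → ℝ)
    (hL : 0 < L) (hβ : 1 ≤ β) (hκ : 0 ≤ κ) (hζ : ∀ i, 0 ≤ ζ i)
    (hη0 : 0 < η) (hη : η ≤ 1 / (3 * τ * L))
    (θ : EuclideanSpace ℝ (Fin d))
    (f : Fin n → EuclideanSpace ℝ (Fin d) → ℝ)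
    (hdiff : ∀ i, Differentiable ℝ (f i))
    (hlip : ∀ i, LipschitzWith (Real.toNNReal L) (gradient (f i)))
    (hdissim : ∀ x : EuclideanSpace ℝ (Fin d),
      (1 / (n : ℝ)) * ∑ i, ‖gradient (f i) x‖ ^ 2 ≤
        β ^ 2 * ‖gradient (fun y => (1 / (n : ℝ)) * ∑ i, f i y) x‖ ^ 2 + κ ^ 2)
    (ℱ : Filtration ℕ mΩ)
    (θ' g : Fin n → ℕ → Ω → EuclideanSpace ℝ (Fin d))
    (hinit : ∀ i, θ' i 0 = fun _ => θ)
    (hupdate : ∀ i, ∀ s < τ, θ' i (s + 1) = fun ω => θ' i s ω - η • g i s ω)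
    (hmeas : ∀ i, ∀ s ≤ τ, StronglyMeasurable[ℱ s] (θ' i s))
    (hunbiased : ∀ i, ∀ s < τ,
      P[g i s|ℱ s] =ᵐ[P] fun ω => gradient (f i) (θ' i s ω))
    (hvar : ∀ i, ∀ s < τ,
      ∫ ω, ‖g i s ω - gradient (f i) (θ' i s ω)‖ ^ 2 ∂P ≤ (ζ i) ^ 2)
    (hL2θ : ∀ i, ∀ s ≤ τ, MemLp (θ' i s) 2 P)
    (hL2g : ∀ i, ∀ s < τ, MemLp (g i s) 2 P) :
    ∀ s ≤ τ,
      (1 / (n : ℝ)) * ∑ i, ∫ ω, ‖θ - θ' i s ω‖ ^ 2 ∂P ≤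
        16 * η ^ 2 * (τ : ℝ) ^ 2 * β ^ 2 *
            ‖gradient (fun y => (1 / (n : ℝ)) * ∑ i, f i y) θ‖ ^ 2
          + 16 * η ^ 2 * (τ : ℝ) ^ 2 * κ ^ 2
          + 4 * (τ : ℝ) * η ^ 2 * ((1 / (n : ℝ)) * ∑ i, (ζ i) ^ 2) := by
  have hn0 : (0 : ℝ) < n := by exact_mod_cast hn
  have hτ0 : (0 : ℝ) < τ := by positivity
  -- ambient measurable-space facts
  -- notation abbreviations
  set G2 : ℝ := ‖gradient (fun y => (1 / (n : ℝ)) * ∑ i, f i y) θ‖ ^ 2 with hG2def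
  set Zbar : ℝ := (1 / (n : ℝ)) * ∑ i, (ζ i) ^ 2 with hZbardef
  set B : ℝ := 16 * η ^ 2 * (τ : ℝ) ^ 2 * β ^ 2 * G2 + 16 * η ^ 2 * (τ : ℝ) ^ 2 * κ ^ 2
      + 4 * (τ : ℝ) * η ^ 2 * Zbar with hBdef
  have hG20 : 0 ≤ G2 := by positivity
  have hZbar0 : 0 ≤ Zbar := by
    have : 0 ≤ ∑ i, (ζ i) ^ 2 := Finset.sum_nonneg fun i _ => sq_nonneg _
    positivity
  have hB0 : 0 ≤ B := by positivity
  -- gradient process: measurability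
  have hgrm : ∀ i, ∀ r ≤ τ, StronglyMeasurable[ℱ r] (fun ω => gradient (f i) (θ' i r ω)) :=
    fun i r hr => (hlip i).continuous.comp_stronglyMeasurable (hmeas i r hr)
  -- gradient process: L²
  have hgr2 : ∀ i, ∀ r ≤ τ, MemLp (fun ω => gradient (f i) (θ' i r ω)) 2 P := by
    intro i r hr
    have hbound : MemLp (fun ω => ‖gradient (f i) θ‖ + L * ‖θ' i r ω - θ‖) 2 P := by
      have h1 : MemLp (fun _ : Ω => ‖gradient (f i) θ‖) 2 P := memLp_const _
      have h2 : MemLp (fun ω => L * ‖θ' i r ω - θ‖) 2 P :=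
        (((hL2θ i r hr).sub (memLp_const θ)).norm).const_mul L
      exact h1.add h2
    refine MemLp.of_le hbound
      (((hgrm i r hr).mono (ℱ.le r)).aestronglyMeasurable) ?_
    refine Filter.Eventually.of_forall fun ω => ?_
    have hd := (hlip i).dist_le_mul (θ' i r ω) θ
    rw [dist_eq_norm, dist_eq_norm, Real.coe_toNNReal L hL.le] at hd
    have h1 : ‖gradient (f i) (θ' i r ω)‖ ≤ ‖gradient (f i) θ‖ + L * ‖θ' i r ω - θ‖ := by
      have h2 := norm_sub_norm_le (gradient (f i) (θ' i r ω)) (gradient (f i) θ)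
      linarith
    have h3 : 0 ≤ ‖gradient (f i) θ‖ + L * ‖θ' i r ω - θ‖ := by positivity
    rw [Real.norm_eq_abs, abs_of_nonneg h3]
    exact h1
  -- g measurable w.r.t. ℱ (r+1)
  have hgm : ∀ i, ∀ r < τ, StronglyMeasurable[ℱ (r + 1)] (g i r) := by
    intro i r hr
    have heq : g i r = fun ω => (η⁻¹ : ℝ) • (θ' i r ω - θ' i (r + 1) ω) := by
      funext ω
      have h := congrFun (hupdate i r hr) ω
      rw [h, sub_sub_cancel, smul_smul, inv_mul_cancel₀ hη0.ne', one_smul]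
    rw [heq]
    exact (((hmeas i r hr.le).mono (ℱ.mono (Nat.le_succ r))).sub
      (hmeas i (r + 1) hr)).const_smul (η⁻¹)
  -- conditional expectation of noise is zero
  have hX0 : ∀ i, ∀ r < τ,
      P[fun ω => g i r ω - gradient (f i) (θ' i r ω)|ℱ r] =ᵐ[P] 0 := by
    intro i r hr
    have hgint : Integrable (g i r) P := (hL2g i r hr).integrable one_le_two
    have hgrint : Integrable (fun ω => gradient (f i) (θ' i r ω)) P :=
      (hgr2 i r hr.le).integrable one_le_two
    have h1 : P[fun ω => g i r ω - gradient (f i) (θ' i r ω)|ℱ r] =ᵐ[P]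
        P[g i r|ℱ r] - P[fun ω => gradient (f i) (θ' i r ω)|ℱ r] :=
      condExp_sub hgint hgrint _
    have h2 : P[fun ω => gradient (f i) (θ' i r ω)|ℱ r]
        = fun ω => gradient (f i) (θ' i r ω) :=
      condExp_of_stronglyMeasurable (ℱ.le r) (hgrm i r hr.le) hgrint
    filter_upwards [h1, hunbiased i r hr] with ω hω1 hω2
    rw [hω1, Pi.sub_apply, h2, hω2, sub_self, Pi.zero_apply]
  -- noise L²
  have hXm2 : ∀ i, ∀ r < τ, MemLp (fun ω => g i r ω - gradient (f i) (θ' i r ω)) 2 P :=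
    fun i r hr => (hL2g i r hr).sub (hgr2 i r hr.le)
  -- noise measurable
  have hXsm : ∀ i, ∀ r < τ,
      StronglyMeasurable[ℱ (r + 1)] (fun ω => g i r ω - gradient (f i) (θ' i r ω)) :=
    fun i r hr => (hgm i r hr).sub ((hgrm i r hr.le).mono (ℱ.mono (Nat.le_succ r)))
  -- martingale sum bound
  have hNsum : ∀ i, ∀ s ≤ τ,
      ∫ ω, ‖∑ r ∈ Finset.range s, (g i r ω - gradient (f i) (θ' i r ω))‖ ^ 2 ∂P
        ≤ (τ : ℝ) * (ζ i) ^ 2 := by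
    intro i s hs
    rw [auxBLD_mart_sum ℱ (fun r ω => g i r ω - gradient (f i) (θ' i r ω)) τ
      (fun r hr => hXsm i r hr) (fun r hr => hXm2 i r hr) (fun r hr => hX0 i r hr) s hs]
    calc ∑ r ∈ Finset.range s, ∫ ω, ‖g i r ω - gradient (f i) (θ' i r ω)‖ ^ 2 ∂P
        ≤ ∑ _r ∈ Finset.range s, (ζ i) ^ 2 := by
          refine Finset.sum_le_sum fun r hr => ?_
          exact hvar i r (lt_of_lt_of_le (Finset.mem_range.mp hr) hs)
      _ = (s : ℝ) * (ζ i) ^ 2 := by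
          rw [Finset.sum_const, Finset.card_range, nsmul_eq_mul]
      _ ≤ (τ : ℝ) * (ζ i) ^ 2 := by
          have : (s : ℝ) ≤ (τ : ℝ) := by exact_mod_cast hs
          exact mul_le_mul_of_nonneg_right this (sq_nonneg _)
  -- telescope
  have htel : ∀ i, ∀ s ≤ τ, ∀ ω, θ - θ' i s ω = η • ∑ r ∈ Finset.range s, g i r ω := by
    intro i s
    induction s with
    | zero => intro _ ω; simp [hinit i]
    | succ s ih =>
      intro hs ω
      have hsτ : s < τ := hs
      have h := congrFun (hupdate i s hsτ) ω
      rw [h, Finset.sum_range_succ, smul_add, ← ih hsτ.le ω]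
      abel
  -- integrability facts
  have hInt : ∀ i, ∀ s ≤ τ, Integrable (fun ω => ‖θ - θ' i s ω‖ ^ 2) P :=
    fun i s hs => (((memLp_const θ).sub (hL2θ i s hs)).norm).integrable_sq
  have hIntgr : ∀ i, ∀ r ≤ τ, Integrable (fun ω => ‖gradient (f i) (θ' i r ω)‖ ^ 2) P :=
    fun i r hr => ((hgr2 i r hr).norm).integrable_sq
  have hIntN : ∀ i, ∀ s ≤ τ, Integrable
      (fun ω => ‖∑ r ∈ Finset.range s, (g i r ω - gradient (f i) (θ' i r ω))‖ ^ 2) P := by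
    intro i s hs
    have hsum : MemLp (fun ω => ∑ r ∈ Finset.range s,
        (g i r ω - gradient (f i) (θ' i r ω))) 2 P := by
      have := memLp_finset_sum' (μ := P) (p := 2) (Finset.range s)
        (f := fun r ω => g i r ω - gradient (f i) (θ' i r ω))
        (fun r hr => hXm2 i r (lt_of_lt_of_le (Finset.mem_range.mp hr) hs))
      convert this using 1
      funext ω
      simp
    exact hsum.norm.integrable_sq
  -- per-client one-round bound
  have hstep : ∀ i, ∀ s ≤ τ, ∫ ω, ‖θ - θ' i s ω‖ ^ 2 ∂P ≤
      2 * η ^ 2 * (τ : ℝ) * ∑ r ∈ Finset.range s,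
        ∫ ω, ‖gradient (f i) (θ' i r ω)‖ ^ 2 ∂P
      + 2 * η ^ 2 * ((τ : ℝ) * (ζ i) ^ 2) := by
    intro i s hs
    have hpt : ∀ ω, ‖θ - θ' i s ω‖ ^ 2 ≤
        2 * η ^ 2 * (τ : ℝ) * ∑ r ∈ Finset.range s, ‖gradient (f i) (θ' i r ω)‖ ^ 2
        + 2 * η ^ 2 *
          ‖∑ r ∈ Finset.range s, (g i r ω - gradient (f i) (θ' i r ω))‖ ^ 2 := by
      intro ω
      have ht := htel i s hs ω
      have hsplit : (∑ r ∈ Finset.range s, g i r ω)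
          = (∑ r ∈ Finset.range s, gradient (f i) (θ' i r ω))
            + ∑ r ∈ Finset.range s, (g i r ω - gradient (f i) (θ' i r ω)) := by
        rw [← Finset.sum_add_distrib]
        exact Finset.sum_congr rfl fun r _ => by abel
      set D := ∑ r ∈ Finset.range s, gradient (f i) (θ' i r ω) with hD
      set N := ∑ r ∈ Finset.range s, (g i r ω - gradient (f i) (θ' i r ω)) with hN
      have heq : ‖θ - θ' i s ω‖ ^ 2 = η ^ 2 * ‖D + N‖ ^ 2 := by
        rw [ht, hsplit, norm_smul, Real.norm_eq_abs, mul_pow, sq_abs]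
      have hDb : ‖D‖ ^ 2 ≤ (τ : ℝ) * ∑ r ∈ Finset.range s, ‖gradient (f i) (θ' i r ω)‖ ^ 2 := by
        have h1 : ‖D‖ ≤ ∑ r ∈ Finset.range s, ‖gradient (f i) (θ' i r ω)‖ :=
          norm_sum_le _ _
        have h2 : (∑ r ∈ Finset.range s, ‖gradient (f i) (θ' i r ω)‖) ^ 2
            ≤ (s : ℝ) * ∑ r ∈ Finset.range s, ‖gradient (f i) (θ' i r ω)‖ ^ 2 := by
          have := Finset.sum_mul_sq_le_sq_mul_sq (Finset.range s) (fun _ => (1 : ℝ))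
            (fun r => ‖gradient (f i) (θ' i r ω)‖)
          simpa using this
        have h3 : (s : ℝ) ≤ (τ : ℝ) := by exact_mod_cast hs
        have h4 : 0 ≤ ∑ r ∈ Finset.range s, ‖gradient (f i) (θ' i r ω)‖ ^ 2 :=
          Finset.sum_nonneg fun r _ => sq_nonneg _
        have h5 : 0 ≤ ∑ r ∈ Finset.range s, ‖gradient (f i) (θ' i r ω)‖ :=
          Finset.sum_nonneg fun r _ => norm_nonneg _
        nlinarith [norm_nonneg D]
      have hDN : ‖D + N‖ ^ 2 ≤ 2 * ‖D‖ ^ 2 + 2 * ‖N‖ ^ 2 := by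
        have h := norm_add_le D N
        nlinarith [mul_self_le_mul_self (norm_nonneg (D + N)) h, sq_nonneg (‖D‖ - ‖N‖)]
      rw [heq]
      nlinarith [sq_nonneg η, hDb, hDN, sq_nonneg ‖N‖]
    have hIntRHS : Integrable (fun ω =>
        2 * η ^ 2 * (τ : ℝ) * ∑ r ∈ Finset.range s, ‖gradient (f i) (θ' i r ω)‖ ^ 2
        + 2 * η ^ 2 *
          ‖∑ r ∈ Finset.range s, (g i r ω - gradient (f i) (θ' i r ω))‖ ^ 2) P := by
      have h1 : Integrable (fun ω => ∑ r ∈ Finset.range s,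
          ‖gradient (f i) (θ' i r ω)‖ ^ 2) P :=
        integrable_finset_sum _ fun r hr =>
          hIntgr i r (le_trans (Finset.mem_range.mp hr).le hs)
      exact (h1.const_mul _).add ((hIntN i s hs).const_mul _)
    calc ∫ ω, ‖θ - θ' i s ω‖ ^ 2 ∂P
        ≤ ∫ ω, (2 * η ^ 2 * (τ : ℝ) * ∑ r ∈ Finset.range s,
              ‖gradient (f i) (θ' i r ω)‖ ^ 2
            + 2 * η ^ 2 *
              ‖∑ r ∈ Finset.range s, (g i r ω - gradient (f i) (θ' i r ω))‖ ^ 2) ∂P :=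
          integral_mono (hInt i s hs) hIntRHS hpt
      _ = 2 * η ^ 2 * (τ : ℝ) * ∑ r ∈ Finset.range s,
            ∫ ω, ‖gradient (f i) (θ' i r ω)‖ ^ 2 ∂P
          + 2 * η ^ 2 * ∫ ω, ‖∑ r ∈ Finset.range s,
              (g i r ω - gradient (f i) (θ' i r ω))‖ ^ 2 ∂P := by
          have h1 : Integrable (fun ω => ∑ r ∈ Finset.range s,
              ‖gradient (f i) (θ' i r ω)‖ ^ 2) P :=
            integrable_finset_sum _ fun r hr =>
              hIntgr i r (le_trans (Finset.mem_range.mp hr).le hs)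
          rw [integral_add (h1.const_mul _) ((hIntN i s hs).const_mul _),
            integral_const_mul, integral_const_mul,
            integral_finset_sum _ fun r hr =>
              hIntgr i r (le_trans (Finset.mem_range.mp hr).le hs)]
      _ ≤ 2 * η ^ 2 * (τ : ℝ) * ∑ r ∈ Finset.range s,
            ∫ ω, ‖gradient (f i) (θ' i r ω)‖ ^ 2 ∂P
          + 2 * η ^ 2 * ((τ : ℝ) * (ζ i) ^ 2) :=
          add_le_add_right
            (mul_le_mul_of_nonneg_left (hNsum i s hs) (by positivity)) _
  -- gradient-norm integral bound via smoothness
  have hgrI : ∀ i, ∀ r ≤ τ, ∫ ω, ‖gradient (f i) (θ' i r ω)‖ ^ 2 ∂P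
      ≤ 2 * ‖gradient (f i) θ‖ ^ 2 + 2 * L ^ 2 * ∫ ω, ‖θ - θ' i r ω‖ ^ 2 ∂P := by
    intro i r hr
    have hpt : ∀ ω, ‖gradient (f i) (θ' i r ω)‖ ^ 2
        ≤ 2 * ‖gradient (f i) θ‖ ^ 2 + 2 * L ^ 2 * ‖θ - θ' i r ω‖ ^ 2 := by
      intro ω
      have hd := (hlip i).dist_le_mul (θ' i r ω) θ
      rw [dist_eq_norm, dist_eq_norm, Real.coe_toNNReal L hL.le] at hd
      have h2 := norm_sub_norm_le (gradient (f i) (θ' i r ω)) (gradient (f i) θ)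
      have h3 : ‖θ' i r ω - θ‖ = ‖θ - θ' i r ω‖ := norm_sub_rev _ _
      rw [h3] at hd
      have h4 : ‖gradient (f i) (θ' i r ω)‖ ≤ ‖gradient (f i) θ‖ + L * ‖θ - θ' i r ω‖ := by
        linarith
      nlinarith [mul_self_le_mul_self (norm_nonneg (gradient (f i) (θ' i r ω))) h4,
        sq_nonneg (‖gradient (f i) θ‖ - L * ‖θ - θ' i r ω‖)]
    calc ∫ ω, ‖gradient (f i) (θ' i r ω)‖ ^ 2 ∂P
        ≤ ∫ ω, (2 * ‖gradient (f i) θ‖ ^ 2 + 2 * L ^ 2 * ‖θ - θ' i r ω‖ ^ 2) ∂P :=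
          integral_mono (hIntgr i r hr)
            ((integrable_const _).add ((hInt i r hr).const_mul _)) hpt
      _ = 2 * ‖gradient (f i) θ‖ ^ 2 + 2 * L ^ 2 * ∫ ω, ‖θ - θ' i r ω‖ ^ 2 ∂P := by
          rw [integral_add (integrable_const _) ((hInt i r hr).const_mul _),
            integral_const, probReal_univ, smul_eq_mul, one_mul,
            integral_const_mul]
  -- helper: sums dominated via hdissim
  have hSGb : ∑ i, ‖gradient (f i) θ‖ ^ 2 ≤ (n : ℝ) * (β ^ 2 * G2 + κ ^ 2) := by
    have h3 := hdissim θ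
    rw [← hG2def] at h3
    rw [one_div, inv_mul_eq_div, div_le_iff₀ hn0] at h3
    linarith
  have hSZ : (∑ i, (ζ i) ^ 2) = (n : ℝ) * Zbar := by
    rw [hZbardef]; field_simp
  -- main induction
  intro s
  induction s using Nat.strong_induction_on with
  | _ s ih =>
    intro hs
    -- sum over clients of hstep
    have h1 : ∑ i, ∫ ω, ‖θ - θ' i s ω‖ ^ 2 ∂P ≤
        2 * η ^ 2 * (τ : ℝ) * ∑ r ∈ Finset.range s,
          (∑ i, ∫ ω, ‖gradient (f i) (θ' i r ω)‖ ^ 2 ∂P)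
        + 2 * η ^ 2 * (τ : ℝ) * ∑ i, (ζ i) ^ 2 := by
      calc ∑ i, ∫ ω, ‖θ - θ' i s ω‖ ^ 2 ∂P
          ≤ ∑ i, (2 * η ^ 2 * (τ : ℝ) * ∑ r ∈ Finset.range s,
              ∫ ω, ‖gradient (f i) (θ' i r ω)‖ ^ 2 ∂P
            + 2 * η ^ 2 * ((τ : ℝ) * (ζ i) ^ 2)) :=
            Finset.sum_le_sum fun i _ => hstep i s hs
        _ = 2 * η ^ 2 * (τ : ℝ) * ∑ i, ∑ r ∈ Finset.range s,
              ∫ ω, ‖gradient (f i) (θ' i r ω)‖ ^ 2 ∂P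
            + 2 * η ^ 2 * (τ : ℝ) * ∑ i, (ζ i) ^ 2 := by
            rw [Finset.sum_add_distrib]
            congr 1
            · exact (Finset.mul_sum _ _ _).symm
            · rw [Finset.mul_sum]
              exact Finset.sum_congr rfl fun i _ => by ring
        _ = _ := by rw [Finset.sum_comm]
    -- bound each column sum
    have hJr : ∀ r < s, (∑ i, ∫ ω, ‖gradient (f i) (θ' i r ω)‖ ^ 2 ∂P)
        ≤ (n : ℝ) * (2 * (β ^ 2 * G2 + κ ^ 2) + 2 * L ^ 2 * B) := by
      intro r hr
      have hrτ : r ≤ τ := le_trans hr.le hs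
      have h2 : ∑ i, ∫ ω, ‖gradient (f i) (θ' i r ω)‖ ^ 2 ∂P ≤
          ∑ i, (2 * ‖gradient (f i) θ‖ ^ 2 + 2 * L ^ 2 * ∫ ω, ‖θ - θ' i r ω‖ ^ 2 ∂P) :=
        Finset.sum_le_sum fun i _ => hgrI i r hrτ
      have h3 : ∑ i, (2 * ‖gradient (f i) θ‖ ^ 2 + 2 * L ^ 2 * ∫ ω, ‖θ - θ' i r ω‖ ^ 2 ∂P)
          = 2 * (∑ i, ‖gradient (f i) θ‖ ^ 2)
            + 2 * L ^ 2 * ∑ i, ∫ ω, ‖θ - θ' i r ω‖ ^ 2 ∂P := by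
        rw [Finset.sum_add_distrib]
        congr 1
        · exact (Finset.mul_sum _ _ _).symm
        · exact (Finset.mul_sum _ _ _).symm
      have h4 : ∑ i, ∫ ω, ‖θ - θ' i r ω‖ ^ 2 ∂P ≤ (n : ℝ) * B := by
        have h5 := ih r hr hrτ
        rw [one_div, inv_mul_eq_div, div_le_iff₀ hn0] at h5
        linarith
      have hL2 : (0 : ℝ) ≤ 2 * L ^ 2 := by positivity
      nlinarith [hSGb, h2, h3.le, h3.symm.le, h4]
    -- total bound
    have h8 : ∑ r ∈ Finset.range s, (∑ i, ∫ ω, ‖gradient (f i) (θ' i r ω)‖ ^ 2 ∂P)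
        ≤ (τ : ℝ) * ((n : ℝ) * (2 * (β ^ 2 * G2 + κ ^ 2) + 2 * L ^ 2 * B)) := by
      calc ∑ r ∈ Finset.range s, (∑ i, ∫ ω, ‖gradient (f i) (θ' i r ω)‖ ^ 2 ∂P)
          ≤ ∑ _r ∈ Finset.range s,
              ((n : ℝ) * (2 * (β ^ 2 * G2 + κ ^ 2) + 2 * L ^ 2 * B)) :=
            Finset.sum_le_sum fun r hr => hJr r (Finset.mem_range.mp hr)
        _ = (s : ℝ) * ((n : ℝ) * (2 * (β ^ 2 * G2 + κ ^ 2) + 2 * L ^ 2 * B)) := by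
            rw [Finset.sum_const, Finset.card_range, nsmul_eq_mul]
        _ ≤ (τ : ℝ) * ((n : ℝ) * (2 * (β ^ 2 * G2 + κ ^ 2) + 2 * L ^ 2 * B)) := by
            have hcast : (s : ℝ) ≤ (τ : ℝ) := by exact_mod_cast hs
            have hpos : (0 : ℝ) ≤ (n : ℝ) * (2 * (β ^ 2 * G2 + κ ^ 2) + 2 * L ^ 2 * B) := by
              positivity
            exact mul_le_mul_of_nonneg_right hcast hpos
    have h9 : η ^ 2 * (τ : ℝ) ^ 2 * L ^ 2 ≤ 1 / 9 := by
      have h3 : 0 < 3 * (τ : ℝ) * L := by positivity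
      have h1' : η * (3 * (τ : ℝ) * L) ≤ 1 := by
        rw [← le_div_iff₀ h3]
        exact hη
      nlinarith [mul_pos hη0 h3, hη0.le, h3.le]
    -- conclude
    have h10 : ∑ i, ∫ ω, ‖θ - θ' i s ω‖ ^ 2 ∂P ≤
        2 * η ^ 2 * (τ : ℝ) * ((τ : ℝ) * ((n : ℝ) * (2 * (β ^ 2 * G2 + κ ^ 2) + 2 * L ^ 2 * B)))
        + 2 * η ^ 2 * (τ : ℝ) * ((n : ℝ) * Zbar) := by
      refine h1.trans ?_
      have hc : (0 : ℝ) ≤ 2 * η ^ 2 * (τ : ℝ) := by positivity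
      have := mul_le_mul_of_nonneg_left h8 hc
      rw [hSZ]
      linarith
    have h11 := mul_le_mul_of_nonneg_left h10 (by positivity : (0:ℝ) ≤ 1 / (n : ℝ))
    have h12 : (1 / (n : ℝ)) *
        (2 * η ^ 2 * (τ : ℝ) * ((τ : ℝ) * ((n : ℝ) * (2 * (β ^ 2 * G2 + κ ^ 2) + 2 * L ^ 2 * B)))
        + 2 * η ^ 2 * (τ : ℝ) * ((n : ℝ) * Zbar))
        = 2 * η ^ 2 * (τ : ℝ) ^ 2 * (2 * (β ^ 2 * G2 + κ ^ 2) + 2 * L ^ 2 * B)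
          + 2 * η ^ 2 * (τ : ℝ) * Zbar := by
      field_simp
    rw [h12] at h11
    refine h11.trans ?_
    rw [hBdef]
    nlinarith [mul_nonneg (sub_nonneg.2 h9) hB0, hG20, hZbar0, hκ, hB0, hτ0.le, sq_nonneg η,
      mul_nonneg (mul_nonneg (sq_nonneg η) (sq_nonneg (τ : ℝ)))
        (mul_nonneg (sq_nonneg β) hG20),
      mul_nonneg (mul_nonneg (sq_nonneg η) (sq_nonneg (τ : ℝ))) (sq_nonneg κ),
      mul_nonneg (mul_nonneg (sq_nonneg η) hτ0.le) hZbar0]
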